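/- Let n ≥ q ≥ s and let F ⊆ 2^[n] be a shifted family with the property D(s,q). Then the family F(n) = {A \ {n} : A ∈ F, n ∈ A} of subsets of [n-1] has the property D(s, q-s). -/

import Mathlib

/-- The `(i,j)`-shift of a set. -/
def shiftSet {n : ℕ} (i j : Fin n) (A : Finset (Fin n)) : Finset (Fin n) :=
  if i ∈ A ∨ j ∉ A then A else insert i (A.erase j)

/-- The `(i,j)`-shift of a family. -/
def shiftFam {n : ℕ} (i j : Fin n) (F : Finset (Finset (Fin n))) :
    Finset (Finset (Fin n)) :=
  F.image (shiftSet i j) ∪ F.filter fun A => shiftSet i j A ∈ F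

/-- The property `D(s,q)`: every `s` pairwise disjoint members have union of size `> q`. -/
def PropD {n : ℕ} (F : Finset (Finset (Fin n))) (s q : ℕ) : Prop :=
  ∀ 𝒜 : Finset (Finset (Fin n)), 𝒜 ⊆ F → 𝒜.card = s →
    (𝒜 : Set (Finset (Fin n))).Pairwise Disjoint → q < (𝒜.biUnion id).card

theorem stmt7 (n s q : ℕ) (hq : q ≤ n) (hsq : s ≤ q) (hn : 0 < n)
    (F : Finset (Finset (Fin n)))
    (hshift : ∀ i j : Fin n, i < j → shiftFam i j F = F)
    (hF : PropD F s q) :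
    PropD ((F.filter fun A => (⟨n - 1, by omega⟩ : Fin n) ∈ A).image
      fun A => A.erase (⟨n - 1, by omega⟩ : Fin n)) s (q - s) := by
  intro 𝒜 h𝒜 hcard hdisj
  set m : Fin n := ⟨n - 1, by omega⟩ with hm
  -- F is closed under shifts
  have hclosed : ∀ A ∈ F, ∀ i j : Fin n, i < j → shiftSet i j A ∈ F := by
    intro A hA i j hij
    rw [← hshift i j hij]
    exact Finset.mem_union_left _ (Finset.mem_image_of_mem _ hA)
  have hB : ∀ B ∈ 𝒜, m ∉ B ∧ insert m B ∈ F := by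
    intro B hBmem
    obtain ⟨A, hA, rfl⟩ := Finset.mem_image.mp (h𝒜 hBmem)
    have hA' := Finset.mem_filter.mp hA
    refine ⟨Finset.notMem_erase _ _, ?_⟩
    rw [Finset.insert_erase hA'.2]
    exact hA'.1
  by_contra hcon
  push_neg at hcon
  set U := 𝒜.biUnion id with hU
  have hBU : ∀ B ∈ 𝒜, B ⊆ U := fun B hBmem => Finset.subset_biUnion_of_mem id hBmem
  have hmU : m ∉ U := by
    rw [hU]
    simp only [Finset.mem_biUnion, id]
    rintro ⟨B, hBmem, hmB⟩
    exact (hB B hBmem).1 hmB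
  set T := Finset.univ \ insert m U with hT
  have hmT : m ∉ T := by simp [hT]
  have hTcard : s ≤ (insert m T).card := by
    rw [Finset.card_insert_of_notMem hmT, hT,
      Finset.card_sdiff_of_subset (Finset.subset_univ _), Finset.card_univ, Fintype.card_fin,
      Finset.card_insert_of_notMem hmU]
    omega
  obtain ⟨S', hS'sub, hS'card⟩ := Finset.exists_subset_card_eq hTcard
  have hec : 𝒜.card = S'.card := by rw [hcard, hS'card]
  set e := Finset.equivOfCardEq hec with he
  set f : Finset (Fin n) → Fin n :=
    fun B => if h : B ∈ 𝒜 then (e ⟨B, h⟩ : Fin n) else m with hf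
  have hfS' : ∀ B ∈ 𝒜, f B ∈ S' := by
    intro B hBmem
    simp only [hf, dif_pos hBmem]
    exact (e ⟨B, hBmem⟩).2
  have hfinj : ∀ B ∈ 𝒜, ∀ B' ∈ 𝒜, f B = f B' → B = B' := by
    intro B hBm B' hB'm hfe
    simp only [hf, dif_pos hBm, dif_pos hB'm] at hfe
    have := e.injective (Subtype.ext hfe)
    exact congrArg Subtype.val this
  have hfU : ∀ B ∈ 𝒜, f B ∉ U := by
    intro B hBmem hfU
    have h1 : f B ∈ insert m T := hS'sub (hfS' B hBmem)
    rcases Finset.mem_insert.mp h1 with h2 | h2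
    · exact hmU (h2 ▸ hfU)
    · rw [hT] at h2
      exact (Finset.mem_sdiff.mp h2).2 (Finset.mem_insert_of_mem hfU)
  have hmemF : ∀ B ∈ 𝒜, insert (f B) B ∈ F := by
    intro B hBmem
    by_cases hfm : f B = m
    · rw [hfm]; exact (hB B hBmem).2
    · have h1 : f B ∈ insert m T := hS'sub (hfS' B hBmem)
      have hfT : f B ∈ T := (Finset.mem_insert.mp h1).resolve_left hfm
      have hflt : f B < m := by
        have h2 : (f B).val ≠ m.val := fun hv => hfm (Fin.ext hv)
        have h3 : (f B).val < n := (f B).is_lt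
        rw [Fin.lt_def]
        simp only [hm] at h2 ⊢
        omega
      have hfnB : f B ∉ B := fun h => hfU B hBmem (hBU B hBmem h)
      have hshifted := hclosed _ (hB B hBmem).2 (f B) m hflt
      rw [shiftSet, if_neg] at hshifted
      · rwa [Finset.erase_insert_eq_erase,
          Finset.erase_eq_of_notMem (hB B hBmem).1] at hshifted
      · push_neg
        refine ⟨?_, Finset.mem_insert_self _ _⟩
        simp only [Finset.mem_insert]
        push_neg
        exact ⟨hfm, hfnB⟩
  -- the new family
  set 𝒜' := 𝒜.image (fun B => insert (f B) B) with h𝒜'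
  have hdisj' : ∀ B ∈ 𝒜, ∀ B' ∈ 𝒜, B ≠ B' →
      Disjoint (insert (f B) B) (insert (f B') B') := by
    intro B hBm B' hB'm hne
    rw [Finset.disjoint_left]
    intro x hx hx'
    rcases Finset.mem_insert.mp hx with h1 | h1
    · rcases Finset.mem_insert.mp hx' with h2 | h2
      · exact hne (hfinj B hBm B' hB'm (h1.symm.trans h2))
      · exact hfU B hBm (hBU B' hB'm (h1 ▸ h2))
    · rcases Finset.mem_insert.mp hx' with h2 | h2
      · exact hfU B' hB'm (hBU B hBm (h2 ▸ h1))
      · exact Finset.disjoint_left.mp (hdisj hBm hB'm hne) h1 h2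
  have hinj : Set.InjOn (fun B => insert (f B) B) 𝒜 := by
    intro B hBm B' hB'm heq
    by_contra hne
    have hd := hdisj' B hBm B' hB'm hne
    simp only at heq
    rw [heq] at hd
    have := disjoint_self.mp hd
    exact (Finset.insert_ne_empty _ _) this
  have hsub' : 𝒜' ⊆ F := by
    intro X hX
    obtain ⟨B, hBm, rfl⟩ := Finset.mem_image.mp hX
    exact hmemF B hBm
  have hcard' : 𝒜'.card = s := by
    rw [h𝒜', Finset.card_image_of_injOn hinj, hcard]
  have hpw' : (𝒜' : Set (Finset (Fin n))).Pairwise Disjoint := by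
    intro X hX Y hY hne
    obtain ⟨B, hBm, rfl⟩ := Finset.mem_image.mp (Finset.mem_coe.mp hX)
    obtain ⟨B', hB'm, rfl⟩ := Finset.mem_image.mp (Finset.mem_coe.mp hY)
    exact hdisj' B hBm B' hB'm (fun h => hne (by rw [h]))
  have hkey := hF 𝒜' hsub' hcard' hpw'
  have hsubU : 𝒜'.biUnion id ⊆ U ∪ 𝒜.image f := by
    intro x hx
    obtain ⟨X, hX, hxX⟩ := Finset.mem_biUnion.mp hx
    obtain ⟨B, hBm, rfl⟩ := Finset.mem_image.mp hX
    simp only [id] at hxX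
    rcases Finset.mem_insert.mp hxX with h1 | h1
    · exact Finset.mem_union_right _ (h1 ▸ Finset.mem_image_of_mem f hBm)
    · exact Finset.mem_union_left _ (hBU B hBm h1)
  have hle : (𝒜'.biUnion id).card ≤ U.card + s := by
    calc (𝒜'.biUnion id).card ≤ (U ∪ 𝒜.image f).card := Finset.card_le_card hsubU
      _ ≤ U.card + (𝒜.image f).card := Finset.card_union_le _ _
      _ ≤ U.card + 𝒜.card := by
          gcongr; exact Finset.card_image_le
      _ = U.card + s := by rw [hcard]
  omega
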